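/- There exist 17 pointwise orthonormal tangent vector fields on the sphere S^511; that is, there exist continuous maps V_1, …, V_17 from the unit sphere S^511 of EuclideanSpace ℝ (Fin 512) to EuclideanSpace ℝ (Fin 512) such that for every p ∈ S^511 and all i, j ∈ {1, …, 17}: ⟨V_i(p), p⟩ = 0, and ⟨V_i(p), V_j(p)⟩ = 1 if i = j and 0 if i ≠ j. -/

import Mathlib

open scoped RealInnerProductSpace

/-! Auxiliary construction: 17 signed-permutation operators on `ℝ^512` coming from
masks `(mv i, dv i)` in `GF(2)^9 × GF(2)^9` satisfying the Hurwitz–Radon parity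
conditions.  Each operator sends `p` to `x ↦ ±p (x XOR mv i)`, with sign governed by
the parity of `x AND dv i`.  These are (up to sign) real Clifford gamma matrices. -/

/-- parity of the 9 low bits of a natural number -/
private def par (n : ℕ) : Bool :=
  (List.range 9).foldr (fun i r => Bool.xor (n.testBit i) r) false

private lemma xor_interchange (x y u v : Bool) :
    Bool.xor (Bool.xor x y) (Bool.xor u v)
      = Bool.xor (Bool.xor x u) (Bool.xor y v) := by
  revert x y u v; decide

private lemma parL_xor (l : List ℕ) (a b : ℕ) :
    (l.foldr (fun i r => Bool.xor ((a ^^^ b).testBit i) r) false)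
      = Bool.xor (l.foldr (fun i r => Bool.xor (a.testBit i) r) false)
          (l.foldr (fun i r => Bool.xor (b.testBit i) r) false) := by
  induction l with
  | nil => rfl
  | cons h t ih =>
      simp only [List.foldr_cons]
      rw [ih, Nat.testBit_xor]
      exact xor_interchange _ _ _ _

private lemma par_xor (a b : ℕ) : par (a ^^^ b) = Bool.xor (par a) (par b) :=
  parL_xor (List.range 9) a b

/-- flip masks -/
private def mv : Fin 17 → ℕ :=
  ![317, 97, 473, 505, 435, 467, 42, 304, 418, 446, 246, 408, 274, 361, 506, 330, 117]

/-- sign masks -/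
private def dv : Fin 17 → ℕ :=
  ![113, 170, 90, 380, 297, 9, 471, 28, 230, 15, 317, 312, 347, 411, 109, 78, 327]

private lemma hmv : ∀ i : Fin 17, mv i < 512 := by decide

private lemma Pa : ∀ i : Fin 17, par (mv i &&& dv i) = true := by decide

private lemma Pb : ∀ i j : Fin 17, i ≠ j →
    Bool.xor (par ((mv i ^^^ mv j) &&& dv i)) (par ((mv i ^^^ mv j) &&& dv j)) = true := by decide

private lemma hxor (i j : Fin 17) : mv i ^^^ mv j < 512 := by
  have : mv i ^^^ mv j < 2 ^ 9 :=
    Nat.xor_lt_two_pow (by simpa using hmv i) (by simpa using hmv j)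
  simpa using this

/-- xor-with-mask map on `Fin 512` -/
private def flp (t : ℕ) (x : Fin 512) : Fin 512 :=
  ⟨(x.val ^^^ t) % 512, Nat.mod_lt _ (by norm_num)⟩

private lemma flp_val {t : ℕ} (ht : t < 512) (x : Fin 512) :
    (flp t x).val = x.val ^^^ t := by
  have hx : x.val < 2 ^ 9 := by simpa using x.2
  have : x.val ^^^ t < 2 ^ 9 := Nat.xor_lt_two_pow hx (by simpa using ht)
  exact Nat.mod_eq_of_lt (by simpa using this)

private lemma flp_zero (x : Fin 512) : flp 0 x = x := by
  apply Fin.ext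
  show (x.val ^^^ 0) % 512 = x.val
  simp [Nat.mod_eq_of_lt x.2]

private lemma flp_flp {s t : ℕ} (hs : s < 512) (ht : t < 512) (x : Fin 512) :
    flp s (flp t x) = flp (t ^^^ s) x := by
  apply Fin.ext
  show ((flp t x).val ^^^ s) % 512 = (x.val ^^^ (t ^^^ s)) % 512
  rw [flp_val ht, Nat.xor_assoc]

private lemma F1 (i : Fin 17) (x : Fin 512) : flp (mv i) (flp (mv i) x) = x := by
  rw [flp_flp (hmv i) (hmv i), Nat.xor_self, flp_zero]

private lemma F3 (i j : Fin 17) (x : Fin 512) :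
    flp (mv i) (flp (mv i ^^^ mv j) x) = flp (mv j) x := by
  rw [flp_flp (hmv i) (hxor i j), Nat.xor_comm (mv i) (mv j), Nat.xor_assoc, Nat.xor_self, Nat.xor_zero]

private lemma F3' (i j : Fin 17) (x : Fin 512) :
    flp (mv j) (flp (mv i ^^^ mv j) x) = flp (mv i) x := by
  rw [flp_flp (hmv j) (hxor i j), Nat.xor_assoc, Nat.xor_self, Nat.xor_zero]

private lemma F4 (i j : Fin 17) (x : Fin 512) :
    flp (mv i ^^^ mv j) (flp (mv i ^^^ mv j) x) = x := by
  rw [flp_flp (hxor i j) (hxor i j), Nat.xor_self, flp_zero]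

/-- the Boolean sign bit of field `i` at coordinate `x` -/
private def bsgn (i : Fin 17) (x : Fin 512) : Bool := par (x.val &&& dv i)

private lemma bsgn_flp (i : Fin 17) {t : ℕ} (ht : t < 512) (x : Fin 512) :
    bsgn i (flp t x) = Bool.xor (bsgn i x) (par (t &&& dv i)) := by
  unfold bsgn
  rw [flp_val ht, Nat.and_xor_distrib_right, par_xor]

/-- the real sign of field `i` at coordinate `x` -/
private noncomputable def sgn (i : Fin 17) (x : Fin 512) : ℝ :=
  if bsgn i x then -1 else 1

private lemma sgn_flp (i : Fin 17) (x : Fin 512) :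
    sgn i (flp (mv i) x) = - sgn i x := by
  unfold sgn
  rw [bsgn_flp i (hmv i), Pa i]
  cases bsgn i x <;> norm_num

private lemma sgn_sq (i : Fin 17) (x : Fin 512) : sgn i x * sgn i x = 1 := by
  unfold sgn; cases bsgn i x <;> norm_num

private lemma sgn_mul_flp (i j : Fin 17) (h : i ≠ j) (x : Fin 512) :
    sgn i (flp (mv i ^^^ mv j) x) * sgn j (flp (mv i ^^^ mv j) x)
      = -(sgn i x * sgn j x) := by
  unfold sgn
  rw [bsgn_flp i (hxor i j), bsgn_flp j (hxor i j)]
  have hb := Pb i j h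
  revert hb
  cases bsgn i x <;> cases bsgn j x <;>
    cases par ((mv i ^^^ mv j) &&& dv i) <;> cases par ((mv i ^^^ mv j) &&& dv j) <;>
    intro hb <;> simp_all <;> norm_num

/-- pairing argument: a sum flipped to its negative by an involution is zero -/
private lemma sum_eq_zero_of_flip (t : ℕ) (h : ∀ x, flp t (flp t x) = x)
    (f : Fin 512 → ℝ) (hf : ∀ x, f (flp t x) = - f x) :
    ∑ x : Fin 512, f x = 0 := by
  have h1 : ∑ x : Fin 512, f (flp t x) = ∑ x : Fin 512, f x :=
    Equiv.sum_comp (⟨flp t, flp t, h, h⟩ : Fin 512 ≃ Fin 512) f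
  have h2 : ∑ x : Fin 512, f (flp t x) = -∑ x : Fin 512, f x := by
    rw [Finset.sum_congr rfl fun x _ => hf x, Finset.sum_neg_distrib]
  linarith

/-- The linear operator underlying the `i`-th vector field. -/
private noncomputable def Lmap (i : Fin 17) :
    EuclideanSpace ℝ (Fin 512) →ₗ[ℝ] EuclideanSpace ℝ (Fin 512) where
  toFun p := WithLp.toLp 2 (fun x => sgn i x * p (flp (mv i) x))
  map_add' p q := by
    ext x
    simp [PiLp.add_apply, mul_add]
  map_smul' c p := by
    ext x
    simp [PiLp.smul_apply, smul_eq_mul]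
    ring

private lemma Lmap_apply (i : Fin 17) (p : EuclideanSpace ℝ (Fin 512)) (x : Fin 512) :
    Lmap i p x = sgn i x * p (flp (mv i) x) := rfl

/-- There exist 17 pointwise orthonormal tangent vector fields on the
sphere `S^511`: continuous maps `V i` from the unit sphere of `EuclideanSpace ℝ (Fin 512)`
to `EuclideanSpace ℝ (Fin 512)` with `⟪V i p, p⟫ = 0` and `⟪V i p, V j p⟫ = δᵢⱼ`
at every point `p` of the sphere. -/
theorem exists_seventeen_orthonormal_tangent_fields_on_S511 :
    ∃ V : Fin 17 →
        (Metric.sphere (0 : EuclideanSpace ℝ (Fin 512)) 1 → EuclideanSpace ℝ (Fin 512)),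
      (∀ i, Continuous (V i)) ∧
      (∀ i, ∀ p : Metric.sphere (0 : EuclideanSpace ℝ (Fin 512)) 1,
        ⟪V i p, (p : EuclideanSpace ℝ (Fin 512))⟫ = 0) ∧
      (∀ i j, ∀ p : Metric.sphere (0 : EuclideanSpace ℝ (Fin 512)) 1,
        ⟪V i p, V j p⟫ = if i = j then 1 else 0) := by
  refine ⟨fun i p => Lmap i (p : EuclideanSpace ℝ (Fin 512)), ?_, ?_, ?_⟩
  · intro i
    exact (Lmap i).continuous_of_finiteDimensional.comp continuous_subtype_val
  · intro i p
    rw [PiLp.inner_apply]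
    simp only [RCLike.inner_apply, starRingEnd_apply, star_trivial]
    apply sum_eq_zero_of_flip (mv i) (F1 i)
    intro x
    simp only [Lmap_apply]
    rw [sgn_flp, F1]
    ring
  · intro i j p
    by_cases h : i = j
    · subst h
      simp only [if_pos rfl]
      rw [PiLp.inner_apply]
      simp only [RCLike.inner_apply, starRingEnd_apply, star_trivial]
      have key : ∀ x : Fin 512,
          (Lmap i p : EuclideanSpace ℝ (Fin 512)) x * (Lmap i p : EuclideanSpace ℝ (Fin 512)) x
            = (p : EuclideanSpace ℝ (Fin 512)) (flp (mv i) x)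
              * (p : EuclideanSpace ℝ (Fin 512)) (flp (mv i) x) := by
        intro x
        simp only [Lmap_apply]
        linear_combination ((p : EuclideanSpace ℝ (Fin 512)) (flp (mv i) x)
          * (p : EuclideanSpace ℝ (Fin 512)) (flp (mv i) x)) * sgn_sq i x
      rw [Finset.sum_congr rfl fun x _ => key x]
      have h1 : (∑ x : Fin 512, (p : EuclideanSpace ℝ (Fin 512)) (flp (mv i) x)
            * (p : EuclideanSpace ℝ (Fin 512)) (flp (mv i) x))
          = ∑ y : Fin 512, (p : EuclideanSpace ℝ (Fin 512)) y
            * (p : EuclideanSpace ℝ (Fin 512)) y :=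
        Equiv.sum_comp (⟨flp (mv i), flp (mv i), F1 i, F1 i⟩ : Fin 512 ≃ Fin 512)
          (fun y => (p : EuclideanSpace ℝ (Fin 512)) y * (p : EuclideanSpace ℝ (Fin 512)) y)
      rw [h1]
      have hp : ‖(p : EuclideanSpace ℝ (Fin 512))‖ = 1 :=
        mem_sphere_zero_iff_norm.mp p.2
      have hpin : ⟪(p : EuclideanSpace ℝ (Fin 512)), (p : EuclideanSpace ℝ (Fin 512))⟫
          = (1 : ℝ) := by
        rw [real_inner_self_eq_norm_mul_norm, hp]; norm_num
      rw [PiLp.inner_apply] at hpin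
      simpa only [RCLike.inner_apply, starRingEnd_apply, star_trivial, if_true] using hpin
    · simp only [if_neg h]
      rw [PiLp.inner_apply]
      simp only [RCLike.inner_apply, starRingEnd_apply, star_trivial]
      apply sum_eq_zero_of_flip (mv i ^^^ mv j) (F4 i j)
      intro x
      simp only [Lmap_apply]
      rw [F3 i j, F3' i j]
      linear_combination ((p : EuclideanSpace ℝ (Fin 512)) (flp (mv j) x)
        * (p : EuclideanSpace ℝ (Fin 512)) (flp (mv i) x)) * sgn_mul_flp i j h x
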